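/- For s ≥ 2, the complex number A_{s-1}(i)/((1+i)^{s-2} · (s-1)!) equals the coefficient of z^{s-1} in the Taylor expansion of sec z + tan z; in particular it is a real (indeed rational) number. -/

import Mathlib

open PowerSeries Complex

noncomputable section EulerianSecTan

namespace EulerianSecTan

/-- `e^{iz}` as a formal power series. -/
abbrev u : PowerSeries ℂ := rescale I (exp ℂ)
/-- `e^{-iz}` as a formal power series. -/
abbrev v : PowerSeries ℂ := rescale (-I) (exp ℂ)
/-- `e^{(i-1)z}` as a formal power series. -/
abbrev w : PowerSeries ℂ := rescale (I - 1) (exp ℂ)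

lemma huv : u * v = 1 := by
  rw [exp_mul_exp_eq_exp_add, add_neg_cancel, rescale_zero]; simp

lemma hsin : (2 : PowerSeries ℂ) * PowerSeries.sin ℂ = C (-I) * (u - v) := by
  have h2 : (2 : PowerSeries ℂ) = C 2 := (map_ofNat C 2).symm
  ext n
  rw [h2, coeff_C_mul, coeff_C_mul, map_sub, coeff_rescale, coeff_rescale, coeff_exp]
  rw [show PowerSeries.sin ℂ = mk fun n => if Even n then 0 else algebraMap ℚ ℂ ((-1) ^ (n / 2) / n.factorial) from rfl, coeff_mk]
  rcases Nat.even_or_odd n with he | ho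
  · simp [he, he.neg_pow]
  · obtain ⟨m, rfl⟩ := ho
    have hne : ¬ Even (2*m+1) := by simp [parity_simps]
    have hdiv : (2*m+1)/2 = m := by omega
    rw [if_neg hne, hdiv]
    have h1 : (I:ℂ)^(2*m+1) = (-1)^m * I := by
      rw [pow_succ, pow_mul, I_sq]
    have h2 : (-I:ℂ)^(2*m+1) = -((-1)^m * I) := by
      rw [neg_pow, ← h1]; simp [pow_succ]
    rw [h1, h2]
    have h3 : ∀ q : ℚ, algebraMap ℚ ℂ q = (q : ℂ) := fun q => eq_ratCast _ q
    rw [h3, h3]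
    push_cast
    ring_nf
    rw [I_sq]
    ring

lemma hcos : (2 : PowerSeries ℂ) * PowerSeries.cos ℂ = u + v := by
  have h2 : (2 : PowerSeries ℂ) = C 2 := (map_ofNat C 2).symm
  ext n
  rw [h2, coeff_C_mul, map_add, coeff_rescale, coeff_rescale, coeff_exp]
  rw [show PowerSeries.cos ℂ = mk fun n => if Even n then algebraMap ℚ ℂ ((-1) ^ (n / 2) / n.factorial) else 0 from rfl, coeff_mk]
  rcases Nat.even_or_odd n with he | ho
  · obtain ⟨m, rfl⟩ := he
    have hev : Even (m+m) := ⟨m, rfl⟩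
    have hdiv : (m+m)/2 = m := by omega
    rw [if_pos hev, hdiv]
    have h1 : (I:ℂ)^(m+m) = (-1)^m := by
      rw [← two_mul, pow_mul, I_sq]
    have h2' : (-I:ℂ)^(m+m) = (-1)^m := by
      rw [neg_pow, ← two_mul, pow_mul]; simp [I_sq, pow_mul]
    rw [h1, h2']
    have h3 : ∀ q : ℚ, algebraMap ℚ ℂ q = (q : ℂ) := fun q => eq_ratCast _ q
    rw [h3]
    push_cast
    ring
  · have hne : ¬ Even n := Nat.not_even_iff_odd.mpr ho
    rw [if_neg hne]
    obtain ⟨m, rfl⟩ := ho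
    have h1 : (I:ℂ)^(2*m+1) = (-1)^m * I := by rw [pow_succ, pow_mul, I_sq]
    have h2' : (-I:ℂ)^(2*m+1) = -((-1)^m * I) := by rw [neg_pow, ← h1]; simp [pow_succ]
    rw [h1, h2']
    ring

lemma hsin' : (2 : PowerSeries ℂ) * PowerSeries.sin ℂ = -(C I) * (u - v) := by
  rw [hsin, map_neg]

lemma hI2 : (C I) * (C I) = -1 := by
  rw [← map_mul, I_mul_I, map_neg, map_one]

lemma twoNZ : (2 : PowerSeries ℂ) ≠ 0 := by
  intro h
  have := congrArg (constantCoeff) h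
  rw [map_ofNat, map_zero] at this
  norm_num at this

lemma keymul : (u - C I) * (1 + PowerSeries.sin ℂ + C I * PowerSeries.cos ℂ)
    = 2 * PowerSeries.cos ℂ := by
  have h : (2:PowerSeries ℂ) * ((u - C I) * (1 + PowerSeries.sin ℂ + C I * PowerSeries.cos ℂ))
      = 2 * (2 * PowerSeries.cos ℂ) := by
    linear_combination (u - C I) * hsin' + ((C I)*(u - C I) - 2) * hcos
      + 2*(C I) * huv - 2*v*hI2
  exact mul_left_cancel₀ twoNZ h

lemma const_cos : constantCoeff (PowerSeries.cos ℂ) ≠ 0 := by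
  rw [← coeff_zero_eq_constantCoeff_apply]
  simp [PowerSeries.cos]

lemma const_sub_CI (c : ℂ) : constantCoeff (rescale c (exp ℂ) - C I) ≠ 0 := by
  rw [map_sub, ← coeff_zero_eq_constantCoeff_apply]
  simp only [coeff_rescale, pow_zero, one_mul, coeff_exp, coeff_zero_eq_constantCoeff_apply,
    constantCoeff_C]
  simp only [Nat.factorial_zero, Nat.cast_one, div_one, map_one]
  rw [sub_ne_zero]
  intro h
  simpa [Complex.ext_iff] using h.symm

lemma L4 : (1 + PowerSeries.sin ℂ) * (PowerSeries.cos ℂ)⁻¹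
    = 2 * (u - C I)⁻¹ - C I := by
  have h1 : (1 + PowerSeries.sin ℂ) = (u - C I)⁻¹ * (2 * PowerSeries.cos ℂ) - C I * PowerSeries.cos ℂ := by
    rw [← keymul, ← mul_assoc, PowerSeries.inv_mul_cancel _ (const_sub_CI I), one_mul]
    ring
  rw [h1]
  have : ((u - C I)⁻¹ * (2 * PowerSeries.cos ℂ) - C I * PowerSeries.cos ℂ) * (PowerSeries.cos ℂ)⁻¹
      = (2 * (u - C I)⁻¹ - C I) * (PowerSeries.cos ℂ * (PowerSeries.cos ℂ)⁻¹) := by ring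
  rw [this, PowerSeries.mul_inv_cancel _ const_cos, mul_one]

lemma binom_helper (n : ℕ) (x : ℂ) :
    (x+1)^n - x^n = ∑ j ∈ Finset.range n, (n.choose (j+1) : ℂ) * (-1)^j * (x+1)^(n-1-j) := by
  have h := add_pow (x+1) (-1) n
  rw [add_neg_cancel_right, Finset.sum_range_succ] at h
  simp only [Nat.choose_self, Nat.cast_one, mul_one, Nat.sub_self, pow_zero] at h
  have hr : ∑ j ∈ Finset.range n, (n.choose (j+1) : ℂ) * (-1)^j * (x+1)^(n-1-j)
      = -∑ m ∈ Finset.range n, (x+1)^m * (-1)^(n-m) * (n.choose m : ℂ) := by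
    rw [← Finset.sum_range_reflect (fun m => (x+1)^m * (-1)^(n-m) * (n.choose m : ℂ)) n,
      ← Finset.sum_neg_distrib]
    apply Finset.sum_congr rfl
    intro j hj
    have hj' := Finset.mem_range.mp hj
    have e2 : n - (n - 1 - j) = j + 1 := by omega
    have e3 : n - 1 - j = n - (j+1) := by omega
    rw [e2, e3, Nat.choose_symm (by omega), pow_succ]
    ring
  rw [hr]
  linear_combination -h

lemma ps_rec (n : ℕ) (hn : 1 ≤ n) :
    (1 - X : PowerSeries ℂ) * mk (fun k => ((k:ℂ)+1)^n)
      = ∑ j ∈ Finset.range n, C ((n.choose (j+1) : ℂ) * (-1)^j)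
          * mk (fun k => ((k:ℂ)+1)^(n-1-j)) := by
  ext k
  rw [map_sum]
  simp only [coeff_C_mul, coeff_mk, sub_mul, one_mul, map_sub]
  cases k with
  | zero =>
    simp only [coeff_zero_eq_constantCoeff_apply, map_mul, constantCoeff_X, zero_mul, coeff_zero_eq_constantCoeff_apply, constantCoeff_mk]
    have h := binom_helper n 0
    rw [zero_pow (by omega), zero_add, sub_zero] at h
    simpa [mul_assoc] using h
  | succ k =>
    rw [coeff_succ_X_mul]
    simp only [coeff_mk]
    have h := binom_helper n ((k:ℂ)+1)
    push_cast
    push_cast at h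
    linear_combination h

lemma one_sub_X_pow_ne (n : ℕ) : ((1 - X : PowerSeries ℂ))^n ≠ 0 := by
  apply pow_ne_zero
  intro h
  have := congrArg (constantCoeff) h
  simp at this

lemma A_rec (A : ℕ → Polynomial ℂ)
    (hA : ∀ n, ((A n : PowerSeries ℂ)) =
      (1 - X) ^ (n + 1) * PowerSeries.mk (fun k => ((k : ℂ) + 1) ^ n))
    (n : ℕ) (hn : 1 ≤ n) :
    A n = ∑ j ∈ Finset.range n,
      Polynomial.C ((n.choose (j+1) : ℂ) * (-1)^j) * (1 - Polynomial.X)^j * A (n-(j+1)) := by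
  apply Polynomial.coe_injective
  show ((A n : PowerSeries ℂ)) = ((∑ j ∈ Finset.range n,
      Polynomial.C ((n.choose (j+1) : ℂ) * (-1)^j) * (1 - Polynomial.X)^j * A (n-(j+1)) :
        Polynomial ℂ) : PowerSeries ℂ)
  have hco : ((∑ j ∈ Finset.range n,
      Polynomial.C ((n.choose (j+1) : ℂ) * (-1)^j) * (1 - Polynomial.X)^j * A (n-(j+1)) :
        Polynomial ℂ) : PowerSeries ℂ)
      = ∑ j ∈ Finset.range n, C ((n.choose (j+1) : ℂ) * (-1)^j) * (1 - X)^j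
          * ((A (n-(j+1)) : PowerSeries ℂ)) := by
    rw [← Polynomial.coeToPowerSeries.ringHom_apply, map_sum]
    refine Finset.sum_congr rfl fun j hj => ?_
    simp only [map_mul, map_pow, map_sub, map_one, Polynomial.coeToPowerSeries.ringHom_apply,
      Polynomial.coe_C, Polynomial.coe_X]
  rw [hco, hA n]
  have hterm : ∀ j ∈ Finset.range n,
      C ((n.choose (j+1) : ℂ) * (-1)^j) * (1 - X)^j * ((A (n-(j+1)) : PowerSeries ℂ))
      = (1 - X)^n * (C ((n.choose (j+1) : ℂ) * (-1)^j) * mk (fun k => ((k:ℂ)+1)^(n-1-j))) := by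
    intro j hj
    have hj' := Finset.mem_range.mp hj
    rw [hA (n-(j+1))]
    have e1 : n - (j+1) + 1 = n - j := by omega
    have e2 : n - (j+1) = n - 1 - j := by omega
    rw [e1, e2]
    have e3 : (1 - X : PowerSeries ℂ)^j * (1 - X)^(n-j) = (1 - X)^n := by
      rw [← pow_add]; congr 1; omega
    calc C ((n.choose (j+1) : ℂ) * (-1)^j) * (1 - X)^j * ((1 - X)^(n-j) * mk (fun k => ((k:ℂ)+1)^(n-1-j)))
        = ((1-X)^j * (1-X)^(n-j)) * (C ((n.choose (j+1) : ℂ) * (-1)^j) * mk (fun k => ((k:ℂ)+1)^(n-1-j))) := by ring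
      _ = (1 - X)^n * (C ((n.choose (j+1) : ℂ) * (-1)^j) * mk (fun k => ((k:ℂ)+1)^(n-1-j))) := by rw [e3]
  rw [Finset.sum_congr rfl hterm, ← Finset.mul_sum, pow_succ, mul_comm ((1-X:PowerSeries ℂ)^n) (1-X), mul_comm ((1-X:PowerSeries ℂ)) ((1-X:PowerSeries ℂ)^n), mul_assoc]
  congr 1
  exact ps_rec n hn

lemma a_rec (A : ℕ → Polynomial ℂ)
    (hA : ∀ n, ((A n : PowerSeries ℂ)) =
      (1 - X) ^ (n + 1) * PowerSeries.mk (fun k => ((k : ℂ) + 1) ^ n))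
    (n : ℕ) (hn : 1 ≤ n) :
    (A n).eval I = ∑ j ∈ Finset.range n, (n.choose (j+1) : ℂ) * (I-1)^j * (A (n-(j+1))).eval I := by
  rw [A_rec A hA n hn, Polynomial.eval_finset_sum]
  refine Finset.sum_congr rfl fun j hj => ?_
  simp only [Polynomial.eval_mul, Polynomial.eval_pow, Polynomial.eval_sub, Polynomial.eval_one,
    Polynomial.eval_X, Polynomial.eval_C]
  have : ((-1:ℂ))^j * (1-I)^j = (I-1)^j := by rw [← mul_pow]; ring_nf
  linear_combination (n.choose (j+1) : ℂ) * (A (n-(j+1))).eval I * this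

lemma a_zero (A : ℕ → Polynomial ℂ)
    (hA : ∀ n, ((A n : PowerSeries ℂ)) =
      (1 - X) ^ (n + 1) * PowerSeries.mk (fun k => ((k : ℂ) + 1) ^ n)) :
    (A 0).eval I = 1 := by
  have h0 : A 0 = 1 := by
    apply Polynomial.coe_injective
    show ((A 0 : PowerSeries ℂ)) = (((1 : Polynomial ℂ)) : PowerSeries ℂ)
    rw [hA 0, Polynomial.coe_one]
    have : (mk (fun k => ((k:ℂ)+1)^0) : PowerSeries ℂ) = PowerSeries.mk 1 := by
      ext k; simp
    rw [this, pow_one, mul_comm]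
    exact mk_one_mul_one_sub_eq_one ℂ
  rw [h0, Polynomial.eval_one]

lemma claimA (A : ℕ → Polynomial ℂ)
    (hA : ∀ n, ((A n : PowerSeries ℂ)) =
      (1 - X) ^ (n + 1) * PowerSeries.mk (fun k => ((k : ℂ) + 1) ^ n)) :
    (w - C I)
      * PowerSeries.mk (fun n => (A n).eval I * ((n.factorial : ℂ))⁻¹) = C (1 - I) := by
  have h3 : ∀ q:ℚ, algebraMap ℚ ℂ q = (q:ℂ) := fun q => eq_ratCast _ q
  ext k
  rw [sub_mul, map_sub, coeff_mul, Finset.Nat.sum_antidiagonal_eq_sum_range_succ_mk]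
  simp only [coeff_rescale, coeff_exp, coeff_mk, h3, coeff_C_mul]
  cases k with
  | zero =>
    simp [a_zero A hA]
  | succ k =>
    rw [Finset.sum_range_succ', coeff_C, if_neg (Nat.succ_ne_zero k)]
    have key : ∀ j ∈ Finset.range (k+1),
        (I-1)^(j+1) * ((1 / (((j+1).factorial : ℚ)) : ℚ) : ℂ)
            * (Polynomial.eval I (A (k+1-(j+1))) * (((k+1-(j+1)).factorial : ℂ))⁻¹)
        = (I-1) * (((k+1).choose (j+1) : ℂ) * (I-1)^j * Polynomial.eval I (A (k+1-(j+1))))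
            * ((((k+1).factorial : ℂ)))⁻¹ := by
      intro j hj
      have hjr := Finset.mem_range.mp hj
      have hj' : j+1 ≤ k+1 := by omega
      have hc := Nat.cast_choose ℂ hj'
      have f1 : (((j+1).factorial : ℂ)) ≠ 0 := Nat.cast_ne_zero.mpr (Nat.factorial_ne_zero _)
      have f2 : (((k+1-(j+1)).factorial : ℂ)) ≠ 0 := Nat.cast_ne_zero.mpr (Nat.factorial_ne_zero _)
      have f3 : ((((k+1)).factorial : ℂ)) ≠ 0 := Nat.cast_ne_zero.mpr (Nat.factorial_ne_zero _)
      rw [hc]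
      have f1' : (((1+j).factorial : ℂ)) ≠ 0 := Nat.cast_ne_zero.mpr (Nat.factorial_ne_zero _)
      have f2' : (((k-j).factorial : ℂ)) ≠ 0 := Nat.cast_ne_zero.mpr (Nat.factorial_ne_zero _)
      have f3' : (((1+k).factorial : ℂ)) ≠ 0 := Nat.cast_ne_zero.mpr (Nat.factorial_ne_zero _)
      push_cast
      field_simp
      ring
    have hs : (∑ j ∈ Finset.range (k+1),
        (I-1)^(j+1) * ((1 / (((j+1).factorial : ℚ)) : ℚ) : ℂ)
            * (Polynomial.eval I (A (k+1-(j+1))) * (((k+1-(j+1)).factorial : ℂ))⁻¹))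
        = (I-1) * (Polynomial.eval I (A (k+1)) * ((((k+1).factorial : ℂ)))⁻¹) := by
      rw [Finset.sum_congr rfl key, a_rec A hA (k+1) (Nat.succ_le_succ (Nat.zero_le k)),
        Finset.sum_mul, Finset.mul_sum]
      refine Finset.sum_congr rfl fun j hj => ?_
      ring
    simp only [Nat.factorial_zero, Nat.cast_one, div_one, Rat.cast_one, pow_zero, one_mul,
      Nat.sub_zero] at *
    linear_combination hs

lemma rescale_C' (c a : ℂ) : rescale c (C a) = C a := by
  ext n
  rcases eq_or_ne n 0 with rfl | hn
  · simp [coeff_rescale]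
  · rw [coeff_rescale, coeff_C, if_neg hn, mul_zero]

lemma constCoeff_rescale (c : ℂ) (G : PowerSeries ℂ) :
    constantCoeff (rescale c G) = constantCoeff G := by
  rw [← coeff_zero_eq_constantCoeff_apply, ← coeff_zero_eq_constantCoeff_apply, coeff_rescale]
  simp

lemma rescale_inv (c : ℂ) (G : PowerSeries ℂ) (h : constantCoeff G ≠ 0) :
    rescale c (G⁻¹) = (rescale c G)⁻¹ := by
  rw [PowerSeries.eq_inv_iff_mul_eq_one (by rwa [constCoeff_rescale]), ← map_mul,
    PowerSeries.inv_mul_cancel _ h, map_one]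

lemma rescale_u : rescale (1+I) (u - C I) = w - C I := by
  rw [map_sub, rescale_C', rescale_rescale]
  have : I * (1 + I) = I - 1 := by
    have := I_mul_I
    linear_combination this
  rw [this]

end EulerianSecTan

open EulerianSecTan

/-- For `s ≥ 2`, `A_{s-1}(i)/((1+i)^{s-2}·(s-1)!)` is the coefficient of `z^{s-1}`
in `sec z + tan z = (1 + sin z)/cos z`; in particular it is a rational number. -/
theorem eulerian_coeff_secant_tangent (s : ℕ) (hs : 2 ≤ s) (A : ℕ → Polynomial ℂ)
    (hA : ∀ n, ((A n : PowerSeries ℂ)) =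
      (1 - X) ^ (n + 1) * PowerSeries.mk (fun k => ((k : ℂ) + 1) ^ n)) :
    (A (s - 1)).eval I / ((1 + I) ^ (s - 2) * (s - 1).factorial)
      = PowerSeries.coeff (s - 1) ((1 + PowerSeries.sin ℂ) * (PowerSeries.cos ℂ)⁻¹)
    ∧ ∃ q : ℚ, (A (s - 1)).eval I / ((1 + I) ^ (s - 2) * (s - 1).factorial) = (q : ℂ) := by
  set n := s - 1 with hn
  have hn1 : 1 ≤ n := by omega
  have hs2 : s - 2 = n - 1 := by omega
  -- the F power series and its closed form
  have hF : PowerSeries.mk (fun m => (A m).eval I * ((m.factorial : ℂ))⁻¹)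
      = (w - C I)⁻¹ * C (1-I) := by
    rw [← claimA A hA, ← mul_assoc, PowerSeries.inv_mul_cancel _ (const_sub_CI (I-1)), one_mul]
  -- coefficient extraction
  have hcoeffF : (A n).eval I * ((n.factorial : ℂ))⁻¹
      = (1-I) * ((1+I)^n * PowerSeries.coeff n ((u - C I)⁻¹)) := by
    have h1 : PowerSeries.coeff n (PowerSeries.mk (fun m => (A m).eval I * ((m.factorial : ℂ))⁻¹))
        = (A n).eval I * ((n.factorial : ℂ))⁻¹ := coeff_mk _ _
    rw [← h1, hF]
    rw [← rescale_u, ← rescale_inv _ _ (const_sub_CI I)]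
    rw [mul_comm, coeff_C_mul, coeff_rescale]
  -- the target coefficient
  have htarget : PowerSeries.coeff n ((1 + PowerSeries.sin ℂ) * (PowerSeries.cos ℂ)⁻¹)
      = 2 * PowerSeries.coeff n ((u - C I)⁻¹) := by
    rw [L4, map_sub, coeff_C, if_neg (by omega)]
    rw [show (2 : PowerSeries ℂ) = C 2 from (map_ofNat C 2).symm, coeff_C_mul]
    ring
  -- arithmetic assembly
  have hfact : ((n.factorial : ℂ)) ≠ 0 := Nat.cast_ne_zero.mpr (Nat.factorial_ne_zero _)
  have hIone : (1 + I) ≠ 0 := by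
    intro h
    have := congrArg Complex.im h
    simp at this
  have hIpow : ((1+I):ℂ)^(n-1) ≠ 0 := pow_ne_zero _ hIone
  have h2 : (1-I) * (1+I) = 2 := by
    have := I_mul_I
    linear_combination -this
  have hpow : ((1+I):ℂ)^n = (1+I)^(n-1) * (1+I) := by
    rw [← pow_succ]
    congr 1
    omega
  have hmain : (A n).eval I / ((1 + I) ^ (n - 1) * (n.factorial : ℂ))
      = PowerSeries.coeff n ((1 + PowerSeries.sin ℂ) * (PowerSeries.cos ℂ)⁻¹) := by
    rw [htarget]
    rw [div_eq_iff (by exact mul_ne_zero hIpow hfact)]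
    have := hcoeffF
    rw [hpow] at this
    field_simp at this
    linear_combination this + PowerSeries.coeff n ((u - C I)⁻¹) * (n.factorial : ℂ) * ((1+I):ℂ)^(n-1) * h2
  constructor
  · rw [hs2]
    exact hmain
  · -- rationality
    refine ⟨PowerSeries.coeff n ((1 + PowerSeries.sin ℚ) * (PowerSeries.cos ℚ)⁻¹), ?_⟩
    rw [hs2, hmain]
    have hcq : constantCoeff (PowerSeries.cos ℚ) ≠ 0 := by
      rw [← coeff_zero_eq_constantCoeff_apply]
      simp [PowerSeries.cos]
    have hmap : PowerSeries.map (algebraMap ℚ ℂ) ((1 + PowerSeries.sin ℚ) * (PowerSeries.cos ℚ)⁻¹)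
        = (1 + PowerSeries.sin ℂ) * (PowerSeries.cos ℂ)⁻¹ := by
      rw [map_mul, map_add, map_one, map_sin]
      congr 1
      rw [PowerSeries.eq_inv_iff_mul_eq_one const_cos,
        show PowerSeries.cos ℂ = PowerSeries.map (algebraMap ℚ ℂ) (PowerSeries.cos ℚ) from (map_cos _).symm,
        ← map_mul, PowerSeries.inv_mul_cancel _ hcq, map_one]
    rw [← hmap, PowerSeries.coeff_map]
    exact eq_ratCast _ _
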